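/- arXiv:1806.00709 — 3 statements merged into one kernel-verified Lean document; each statement's English description precedes it below -/
import Mathlib

section
/- Fix an integer t ≥ 0. Suppose v : Ω → 𝓑 is a random vector independent of ℋ_t whose mean γ̄ = E[v] satisfies ⟨a_i, γ̄⟩ ≤ b_i for all i ∈ {1,…,N}, and suppose that almost surely V⟨∇f(γ_{t−1}), x_t⟩ + ⟨Q(t), A x_t⟩ ≤ V⟨∇f(γ_{t−1}), v⟩ + ⟨Q(t), A v⟩ (i.e. x_t achieves no larger value of the algorithm's linear objective than v). Then almost surely E[ V⟨∇f(γ_{t−1}), x_t − γ_{t−1}⟩ + ⟨Q(t), A x_t − b⟩ | ℋ_t ] ≤ V⟨∇f(γ_{t−1}), γ̄ − γ_{t−1}⟩. -/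
open MeasureTheory ProbabilityTheory

lemma integrable_of_bdd {Ω : Type*} {m0 : MeasurableSpace Ω} {μ : Measure Ω} [IsFiniteMeasure μ]
    {g : Ω → ℝ} (hm : AEStronglyMeasurable g μ) {C : ℝ} (h : ∀ ω, |g ω| ≤ C) :
    Integrable g μ :=
  ⟨hm, HasFiniteIntegral.of_bounded (μ := μ) (C := C)
    (Filter.Eventually.of_forall (fun ω => by simpa [Real.norm_eq_abs] using h ω))⟩

lemma cond_mul_indep {Ω : Type*} {m0 : MeasurableSpace Ω} (μ : Measure Ω) [IsProbabilityMeasure μ]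
    {m mv : MeasurableSpace Ω} (hm : m ≤ m0) (hmv : mv ≤ m0) (hindep : Indep mv m μ)
    {u w : Ω → ℝ} (hu : StronglyMeasurable[m] u) (hw : StronglyMeasurable[mv] w)
    {Cu Cw : ℝ} (hub : ∀ ω, |u ω| ≤ Cu) (hwb : ∀ ω, |w ω| ≤ Cw) :
    μ[fun ω => u ω * w ω | m] =ᵐ[μ] fun ω => u ω * ∫ ω', w ω' ∂μ := by
  haveI : SigmaFinite (μ.trim hm) := by infer_instance
  have hwm0 : AEStronglyMeasurable[m0] w μ := (hw.mono hmv).aestronglyMeasurable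
  have hwint : Integrable w μ := integrable_of_bdd hwm0 hwb
  have huw : Integrable (u * w) μ := by
    refine integrable_of_bdd (((hu.mono hm).mul (hw.mono hmv)).aestronglyMeasurable)
      (C := Cu * Cw) (fun ω => ?_)
    rw [Pi.mul_apply, abs_mul]
    exact mul_le_mul (hub ω) (hwb ω) (abs_nonneg _) ((abs_nonneg _).trans (hub ω))
  have h1 : μ[u * w | m] =ᵐ[μ] u * μ[w | m] := condExp_mul_of_stronglyMeasurable_left hu huw hwint
  have h2 : μ[w | m] =ᵐ[μ] fun _ => ∫ ω', w ω' ∂μ := condExp_indep_eq hmv hm hw hindep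
  filter_upwards [h1, h2.mono fun ω hω => congrArg (u ω * ·) hω] with ω hω1 hω2
  exact hω1.trans hω2

lemma coord_abs_le_norm {n : ℕ} (z : EuclideanSpace ℝ (Fin n)) (j : Fin n) : |z j| ≤ ‖z‖ := by
  have := abs_real_inner_le_norm (EuclideanSpace.single j (1:ℝ)) z
  simpa [EuclideanSpace.inner_single_left, EuclideanSpace.norm_single] using this


lemma inner_expand {n : ℕ} (y z : EuclideanSpace ℝ (Fin n)) : (inner ℝ y z : ℝ) = ∑ j, y j * z j := by
  simp [PiLp.inner_apply, RCLike.inner_apply, conj_trivial, mul_comm]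

lemma eval_meas {n : ℕ} {Ω : Type*} {mΩ : MeasurableSpace Ω} {g : Ω → EuclideanSpace ℝ (Fin n)}
    (hg : Measurable g) (j : Fin n) : Measurable fun ω => g ω j := by
  have h : (fun ω => g ω j) = fun ω => (inner ℝ (EuclideanSpace.single j (1:ℝ)) (g ω) : ℝ) := by
    funext ω; simp [EuclideanSpace.inner_single_left]
  rw [h]
  exact Measurable.inner measurable_const hg

lemma integral_eval {n : ℕ} {Ω : Type*} {mΩ : MeasurableSpace Ω} {μ : Measure Ω}
    {g : Ω → EuclideanSpace ℝ (Fin n)} (hg : Integrable g μ) (j : Fin n) :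
    ∫ ω, g ω j ∂μ = (∫ ω, g ω ∂μ) j := by
  have := integral_inner (𝕜 := ℝ) hg (EuclideanSpace.single j (1:ℝ))
  simpa [EuclideanSpace.inner_single_left] using this

set_option maxHeartbeats 1000000 in
theorem stmt0
    {d N : ℕ}
    {Ω : Type*} {m0 : MeasurableSpace Ω} (μ : Measure Ω) [IsProbabilityMeasure μ]
    (ℋ : Filtration ℕ m0)
    (Bset : Set (EuclideanSpace ℝ (Fin d))) (D : ℝ)
    (hBconv : Convex ℝ Bset) (hBcpt : IsCompact Bset)
    (hB0 : (0 : EuclideanSpace ℝ (Fin d)) ∈ Bset)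
    (hBD : ∀ z ∈ Bset, ∀ w ∈ Bset, ‖z - w‖ ≤ D)
    (f : EuclideanSpace ℝ (Fin d) → ℝ) (f' : EuclideanSpace ℝ (Fin d) → EuclideanSpace ℝ (Fin d)) (L M K : ℝ)
    (hgrad : ∀ z, HasGradientAt f (f' z) z)
    (hLip : ∀ z ∈ Bset, ∀ w ∈ Bset, ‖f' z - f' w‖ ≤ L * ‖z - w‖)
    (hM : ∀ z ∈ Bset, ‖f' z‖ ≤ M)
    (hK : ∀ z ∈ Bset, |f z| ≤ K)
    (a : Fin N → EuclideanSpace ℝ (Fin d)) (b : Fin N → ℝ)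
    (x : ℕ → Ω → EuclideanSpace ℝ (Fin d))
    (hxB : ∀ t ω, x t ω ∈ Bset)
    (hxmeas : ∀ t, Measurable[ℋ (t + 1)] (x t))
    (η V : ℝ) (hη0 : 0 < η) (hη1 : η < 1) (hV : 0 < V)
    (Q : ℕ → Ω → EuclideanSpace ℝ (Fin N))
    (hQ0 : ∀ ω, Q 0 ω = 0)
    (hQrec : ∀ t ω i, Q (t + 1) ω i = max (Q t ω i + (inner ℝ (a i) (x t ω) : ℝ) - b i) 0)
    (γ : ℕ → Ω → EuclideanSpace ℝ (Fin d))
    (hγ0 : ∀ ω, γ 0 ω = 0)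
    (hγrec : ∀ t ω, γ (t + 1) ω = (1 - η) • γ t ω + η • x t ω)
    (t : ℕ)
    (v : Ω → EuclideanSpace ℝ (Fin d)) (hvB : ∀ ω, v ω ∈ Bset)
    (hvmeas : Measurable v) (hvint : Integrable v μ)
    (hvindep : Indep (MeasurableSpace.comap v inferInstance) (ℋ t) μ)
    (γbar : EuclideanSpace ℝ (Fin d)) (hγbar : γbar = ∫ ω, v ω ∂μ)
    (hγbarfeas : ∀ i, (inner ℝ (a i) γbar : ℝ) ≤ b i)
    (hopt : ∀ᵐ ω ∂μ,
      V * (inner ℝ (f' (γ t ω)) (x t ω) : ℝ) + ∑ i, Q t ω i * (inner ℝ (a i) (x t ω) : ℝ)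
        ≤ V * (inner ℝ (f' (γ t ω)) (v ω) : ℝ) + ∑ i, Q t ω i * (inner ℝ (a i) (v ω) : ℝ)) :
    ∀ᵐ ω ∂μ,
      (μ[(fun ω' => V * (inner ℝ (f' (γ t ω')) (x t ω' - γ t ω') : ℝ)
          + ∑ i, Q t ω' i * ((inner ℝ (a i) (x t ω') : ℝ) - b i)) | ℋ t]) ω
        ≤ V * (inner ℝ (f' (γ t ω)) (γbar - γ t ω) : ℝ) := by
  classical
  set m := ℋ t with hmdef
  have hm : m ≤ m0 := ℋ.le t
  haveI : SigmaFinite (μ.trim hm) := by infer_instance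
  have hmv : MeasurableSpace.comap v inferInstance ≤ m0 := hvmeas.comap_le
  -- basic bounds
  have hDz : ∀ z ∈ Bset, ‖z‖ ≤ D := fun z hz => by simpa using hBD z hz 0 hB0
  have hD0 : 0 ≤ D := le_trans (norm_nonneg _) (hDz 0 hB0)
  have hM0 : 0 ≤ M := le_trans (norm_nonneg _) (hM 0 hB0)
  -- γ stays in Bset
  have hγB : ∀ s ω, γ s ω ∈ Bset := by
    intro s
    induction s with
    | zero => intro ω; rw [hγ0]; exact hB0
    | succ s ih =>
      intro ω; rw [hγrec]
      exact hBconv (ih ω) (hxB s ω) (by linarith) (le_of_lt hη0) (by ring)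
  -- measurability of γ
  have hγmeas : ∀ s, Measurable[ℋ s] (γ s) := by
    intro s
    induction s with
    | zero =>
      have : γ 0 = fun _ => (0 : EuclideanSpace ℝ (Fin d)) := funext hγ0
      rw [this]; exact measurable_const
    | succ s ih =>
      have : γ (s+1) = fun ω => (1 - η) • γ s ω + η • x s ω := funext (hγrec s)
      rw [this]
      exact ((ih.mono (ℋ.mono (Nat.le_succ s)) le_rfl).const_smul (1 - η)).add
        ((hxmeas s).const_smul η)
  -- Q coordinates: nonneg, measurable, bounded
  have hQnonneg : ∀ s ω i, 0 ≤ Q s ω i := by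
    intro s
    induction s with
    | zero => intro ω i; rw [hQ0]; simp
    | succ s ih => intro ω i; rw [hQrec]; exact le_max_right _ _
  have hQmeas : ∀ s i, Measurable[ℋ s] (fun ω => Q s ω i) := by
    intro s
    induction s with
    | zero =>
      intro i
      have : (fun ω => Q 0 ω i) = fun _ => (0:ℝ) := funext fun ω => by rw [hQ0]; simp
      rw [this]; exact measurable_const
    | succ s ih =>
      intro i
      have : (fun ω => Q (s+1) ω i)
          = fun ω => max (Q s ω i + (inner ℝ (a i) (x s ω) : ℝ) - b i) 0 :=
        funext fun ω => hQrec s ω i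
      rw [this]
      exact ((((ih i).mono (ℋ.mono (Nat.le_succ s)) le_rfl).add
        (measurable_const.inner (hxmeas s))).sub measurable_const).max measurable_const
  have hQbd : ∀ s, ∃ C : ℝ, 0 ≤ C ∧ ∀ ω i, Q s ω i ≤ C := by
    intro s
    induction s with
    | zero => exact ⟨0, le_rfl, fun ω i => by rw [hQ0]; simp⟩
    | succ s ih =>
      obtain ⟨C, hC0, hC⟩ := ih
      have hsum0 : 0 ≤ ∑ j, (‖a j‖ * D + |b j|) :=
        Finset.sum_nonneg fun j _ => by positivity
      refine ⟨C + ∑ i, (‖a i‖ * D + |b i|), by linarith, fun ω i => ?_⟩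
      rw [hQrec]
      have h1 : (inner ℝ (a i) (x s ω) : ℝ) ≤ ‖a i‖ * D := by
        calc (inner ℝ (a i) (x s ω) : ℝ) ≤ ‖a i‖ * ‖x s ω‖ := real_inner_le_norm _ _
        _ ≤ ‖a i‖ * D := by
          exact mul_le_mul_of_nonneg_left (hDz _ (hxB s ω)) (norm_nonneg _)
      have h2 : ‖a i‖ * D + |b i| ≤ ∑ j, (‖a j‖ * D + |b j|) :=
        Finset.single_le_sum (f := fun j => ‖a j‖ * D + |b j|)
          (fun j _ => by positivity) (Finset.mem_univ i)
      have h3 : -b i ≤ |b i| := neg_le_abs _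
      refine max_le (by linarith [hC ω i]) (by linarith)
  obtain ⟨Cq, hCq0, hCq⟩ := hQbd t
  -- measurability of f'
  have hf'meas : Measurable f' := by
    have heq : f' = fun z => (InnerProductSpace.toDual ℝ (EuclideanSpace ℝ (Fin d))).symm
        (fderiv ℝ f z) := by
      funext z
      have := (hasGradientAt_iff_hasFDerivAt.mp (hgrad z)).fderiv
      rw [this]
      simp
    rw [heq]
    exact (LinearIsometryEquiv.continuous _).measurable.comp (measurable_fderiv ℝ f)
  have hcmeas : Measurable[m] (fun ω => f' (γ t ω)) := hf'meas.comp (hγmeas t)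
  have hcbd : ∀ ω, ‖f' (γ t ω)‖ ≤ M := fun ω => hM _ (hγB t ω)
  have hvm : Measurable[MeasurableSpace.comap v inferInstance] v :=
    measurable_iff_comap_le.2 le_rfl
  -- m0-level measurability
  have hxm0 : Measurable[m0] (x t) := (hxmeas t).mono (ℋ.le (t+1)) le_rfl
  have hγm0 : Measurable[m0] (γ t) := (hγmeas t).mono hm le_rfl
  have hcm0 : Measurable[m0] (fun ω => f' (γ t ω)) := hf'meas.comp hγm0
  have hQm0 : ∀ i, Measurable[m0] (fun ω => Q t ω i) := fun i => (hQmeas t i).mono hm le_rfl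
  -- bound constants
  set S : ℝ := ∑ i, Cq * (‖a i‖ * D + |b i|) with hSdef
  have hS0 : 0 ≤ S := Finset.sum_nonneg fun i _ => by positivity
  have hQabs : ∀ ω i, |Q t ω i| ≤ Cq := fun ω i =>
    abs_le.2 ⟨by linarith [hQnonneg t ω i], hCq ω i⟩
  have hinner_bd : ∀ i (z : EuclideanSpace ℝ (Fin d)), z ∈ Bset →
      |(inner ℝ (a i) z : ℝ)| ≤ ‖a i‖ * D := fun i z hz =>
    le_trans (abs_real_inner_le_norm _ _)
      (mul_le_mul_of_nonneg_left (hDz z hz) (norm_nonneg _))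
  have hbd : ∀ ω (F : Fin N → ℝ), (∀ i, |F i| ≤ ‖a i‖ * D + |b i|) →
      |∑ i, Q t ω i * F i| ≤ S := by
    intro ω F hF
    calc |∑ i, Q t ω i * F i| ≤ ∑ i, |Q t ω i * F i| := Finset.abs_sum_le_sum_abs _ _
    _ ≤ S := by
      refine Finset.sum_le_sum fun i _ => ?_
      rw [abs_mul]
      exact mul_le_mul (hQabs ω i) (hF i) (abs_nonneg _) hCq0
  have hcinner_bd : ∀ ω (z : EuclideanSpace ℝ (Fin d)), z ∈ Bset →
      |(inner ℝ (f' (γ t ω)) z : ℝ)| ≤ M * D := fun ω z hz =>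
    le_trans (abs_real_inner_le_norm _ _)
      (mul_le_mul (hcbd ω) (hDz z hz) (norm_nonneg _) hM0)
  -- the functions
  set G : Ω → ℝ := fun ω' => V * (inner ℝ (f' (γ t ω')) (x t ω' - γ t ω') : ℝ)
      + ∑ i, Q t ω' i * ((inner ℝ (a i) (x t ω') : ℝ) - b i) with hGdef
  set h1 : Ω → ℝ := fun ω => V * (inner ℝ (f' (γ t ω)) (v ω) : ℝ) with hh1def
  set g2 : Ω → ℝ := fun ω => V * (inner ℝ (f' (γ t ω)) (γ t ω) : ℝ) with hg2def
  set h3 : Ω → ℝ := fun ω => ∑ i, Q t ω i * (inner ℝ (a i) (v ω) : ℝ) with hh3def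
  set g4 : Ω → ℝ := fun ω => ∑ i, Q t ω i * b i with hg4def
  -- integrability
  have hGint : Integrable G μ := by
    refine integrable_of_bdd ?_ (C := V * (M * D) + S) (fun ω => ?_)
    · refine Measurable.aestronglyMeasurable ?_
      refine Measurable.add (measurable_const.mul ?_) ?_
      · exact Measurable.inner (𝕜 := ℝ) hcm0 (hxm0.sub hγm0)
      · exact Finset.measurable_sum _ fun i _ =>
          (hQm0 i).mul ((Measurable.inner (𝕜 := ℝ) measurable_const hxm0).sub measurable_const)
    · rw [hGdef]
      refine le_trans (abs_add_le _ _) (add_le_add ?_ (hbd ω _ fun i => ?_))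
      · rw [abs_mul, abs_of_pos hV]
        refine mul_le_mul_of_nonneg_left ?_ (le_of_lt hV)
        refine le_trans (abs_real_inner_le_norm _ _)
          (mul_le_mul (hcbd ω) (hBD _ (hxB t ω) _ (hγB t ω)) (norm_nonneg _) hM0)
      · exact le_trans (abs_sub _ _) (add_le_add (hinner_bd i _ (hxB t ω)) le_rfl)
  have hh1int : Integrable h1 μ := by
    refine integrable_of_bdd ?_ (C := V * (M * D)) (fun ω => ?_)
    · exact (measurable_const.mul (Measurable.inner (𝕜 := ℝ) hcm0 hvmeas)).aestronglyMeasurable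
    · rw [hh1def, abs_mul, abs_of_pos hV]
      exact mul_le_mul_of_nonneg_left (hcinner_bd ω _ (hvB ω)) (le_of_lt hV)
  have hg2int : Integrable g2 μ := by
    refine integrable_of_bdd ?_ (C := V * (M * D)) (fun ω => ?_)
    · exact (measurable_const.mul (Measurable.inner (𝕜 := ℝ) hcm0 hγm0)).aestronglyMeasurable
    · rw [hg2def, abs_mul, abs_of_pos hV]
      exact mul_le_mul_of_nonneg_left (hcinner_bd ω _ (hγB t ω)) (le_of_lt hV)
  have hh3int : Integrable h3 μ := by
    refine integrable_of_bdd ?_ (C := S) (fun ω => ?_)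
    · exact (Finset.measurable_sum _ fun i _ =>
        (hQm0 i).mul (Measurable.inner (𝕜 := ℝ) measurable_const hvmeas)).aestronglyMeasurable
    · exact hbd ω _ fun i => le_trans (hinner_bd i _ (hvB ω)) (le_add_of_nonneg_right (abs_nonneg _))
  have hg4int : Integrable g4 μ := by
    refine integrable_of_bdd ?_ (C := S) (fun ω => ?_)
    · exact (Finset.measurable_sum _ fun i _ =>
        (hQm0 i).mul measurable_const).aestronglyMeasurable
    · refine hbd ω _ fun i => ?_
      have : (0:ℝ) ≤ ‖a i‖ * D := by positivity
      linarith [le_refl |b i|]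
  have hHint : Integrable (fun ω => h1 ω - g2 ω + (h3 ω - g4 ω)) μ :=
    (hh1int.sub hg2int).add (hh3int.sub hg4int)
  -- G ≤ H a.e.
  have hGH : G ≤ᵐ[μ] fun ω => h1 ω - g2 ω + (h3 ω - g4 ω) := by
    filter_upwards [hopt] with ω hω
    have e1 : (inner ℝ (f' (γ t ω)) (x t ω - γ t ω) : ℝ)
        = (inner ℝ (f' (γ t ω)) (x t ω) : ℝ) - (inner ℝ (f' (γ t ω)) (γ t ω) : ℝ) :=
      inner_sub_right _ _ _
    have e2 : ∑ i, Q t ω i * ((inner ℝ (a i) (x t ω) : ℝ) - b i)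
        = (∑ i, Q t ω i * (inner ℝ (a i) (x t ω) : ℝ)) - ∑ i, Q t ω i * b i := by
      rw [← Finset.sum_sub_distrib]
      exact Finset.sum_congr rfl fun i _ => mul_sub _ _ _
    show V * (inner ℝ (f' (γ t ω)) (x t ω - γ t ω) : ℝ)
        + ∑ i, Q t ω i * ((inner ℝ (a i) (x t ω) : ℝ) - b i) ≤ _
    rw [e1, e2, mul_sub]
    simp only [hh1def, hg2def, hh3def, hg4def]
    linarith [hω]
  have hmono := condExp_mono (m := m) hGint hHint hGH
  -- condexp of the measurable pieces
  have hg2sm : StronglyMeasurable[m] g2 :=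
    (measurable_const.mul (Measurable.inner (𝕜 := ℝ) hcmeas (hγmeas t))).stronglyMeasurable
  have hg4sm : StronglyMeasurable[m] g4 :=
    (Finset.measurable_sum _ fun i _ => (hQmeas t i).mul measurable_const).stronglyMeasurable
  have hg2cond : μ[g2|m] = g2 := condExp_of_stronglyMeasurable hm hg2sm hg2int
  have hg4cond : μ[g4|m] = g4 := condExp_of_stronglyMeasurable hm hg4sm hg4int
  -- condexp of h1
  have hh1cond : μ[h1|m] =ᵐ[μ] fun ω => V * (inner ℝ (f' (γ t ω)) γbar : ℝ) := by
    set u : Fin d → Ω → ℝ := fun j ω => (V * f' (γ t ω) j) * v ω j with hudef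
    have huint : ∀ j ∈ Finset.univ, Integrable (u j) μ := by
      intro j _
      refine integrable_of_bdd ?_ (C := V * M * D) (fun ω => ?_)
      · exact ((measurable_const.mul (eval_meas hcm0 j)).mul
          (eval_meas hvmeas j)).aestronglyMeasurable
      · rw [abs_mul, abs_mul, abs_of_pos hV]
        refine mul_le_mul (mul_le_mul_of_nonneg_left ?_ (le_of_lt hV)) ?_ (abs_nonneg _)
          (by positivity)
        · exact le_trans (coord_abs_le_norm _ j) (hcbd ω)
        · exact le_trans (coord_abs_le_norm _ j) (hDz _ (hvB ω))
    have h1eq : h1 = ∑ j, u j := by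
      funext ω
      rw [Finset.sum_apply]
      show V * (inner ℝ (f' (γ t ω)) (v ω) : ℝ) = _
      rw [inner_expand, Finset.mul_sum]
      exact Finset.sum_congr rfl fun j _ => (mul_assoc _ _ _).symm
    have e4 := condExp_finset_sum (μ := μ) (m := m) huint
    have e5 : ∀ j : Fin d, μ[u j|m] =ᵐ[μ] fun ω => (V * f' (γ t ω) j) * γbar j := by
      intro j
      have hu : StronglyMeasurable[m] fun ω => V * f' (γ t ω) j :=
        (measurable_const.mul (eval_meas hcmeas j)).stronglyMeasurable
      have hw : StronglyMeasurable[MeasurableSpace.comap v inferInstance] fun ω => v ω j :=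
        (eval_meas hvm j).stronglyMeasurable
      have hub : ∀ ω, |V * f' (γ t ω) j| ≤ V * M := fun ω => by
        rw [abs_mul, abs_of_pos hV]
        exact mul_le_mul_of_nonneg_left (le_trans (coord_abs_le_norm _ j) (hcbd ω)) hV.le
      have hwb : ∀ ω, |v ω j| ≤ D := fun ω =>
        le_trans (coord_abs_le_norm _ j) (hDz _ (hvB ω))
      have := cond_mul_indep μ hm hmv hvindep hu hw hub hwb
      refine this.trans (Filter.Eventually.of_forall fun ω => ?_)
      rw [integral_eval hvint j, ← hγbar]
    have e6 : ∀ᵐ ω ∂μ, ∀ j : Fin d, (μ[u j|m]) ω = (V * f' (γ t ω) j) * γbar j :=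
      (ae_all_iff).2 fun j => e5 j
    rw [h1eq]
    refine e4.trans ?_
    filter_upwards [e6] with ω hω
    rw [Finset.sum_apply]
    calc ∑ j, (μ[u j|m]) ω = ∑ j, (V * f' (γ t ω) j) * γbar j :=
          Finset.sum_congr rfl fun j _ => hω j
    _ = V * (inner ℝ (f' (γ t ω)) γbar : ℝ) := by
          rw [inner_expand, Finset.mul_sum]
          exact Finset.sum_congr rfl fun j _ => mul_assoc _ _ _
  -- condexp of h3
  have hh3cond : μ[h3|m] =ᵐ[μ] fun ω => ∑ i, Q t ω i * (inner ℝ (a i) γbar : ℝ) := by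
    set w : Fin N → Ω → ℝ := fun i ω => Q t ω i * (inner ℝ (a i) (v ω) : ℝ) with hwdef
    have hwint : ∀ i ∈ Finset.univ, Integrable (w i) μ := by
      intro i _
      refine integrable_of_bdd ?_ (C := Cq * (‖a i‖ * D)) (fun ω => ?_)
      · exact ((hQm0 i).mul
          (Measurable.inner (𝕜 := ℝ) measurable_const hvmeas)).aestronglyMeasurable
      · rw [abs_mul]
        exact mul_le_mul (hQabs ω i) (hinner_bd i _ (hvB ω)) (abs_nonneg _) hCq0
    have h3eq : h3 = ∑ i, w i := by
      funext ω
      rw [Finset.sum_apply, hh3def]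
    have e4 := condExp_finset_sum (μ := μ) (m := m) hwint
    have e5 : ∀ i : Fin N, μ[w i|m] =ᵐ[μ] fun ω => Q t ω i * (inner ℝ (a i) γbar : ℝ) := by
      intro i
      have hu : StronglyMeasurable[m] fun ω => Q t ω i := (hQmeas t i).stronglyMeasurable
      have hw' : StronglyMeasurable[MeasurableSpace.comap v inferInstance]
          fun ω => (inner ℝ (a i) (v ω) : ℝ) :=
        (Measurable.inner (𝕜 := ℝ) measurable_const hvm).stronglyMeasurable
      have := cond_mul_indep μ hm hmv hvindep hu hw' (hQabs · i) (fun ω => hinner_bd i _ (hvB ω))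
      refine this.trans (Filter.Eventually.of_forall fun ω => ?_)
      rw [integral_inner (𝕜 := ℝ) hvint (a i), ← hγbar]
    have e6 : ∀ᵐ ω ∂μ, ∀ i : Fin N, (μ[w i|m]) ω = Q t ω i * (inner ℝ (a i) γbar : ℝ) :=
      (ae_all_iff).2 fun i => e5 i
    rw [h3eq]
    refine e4.trans ?_
    filter_upwards [e6] with ω hω
    rw [Finset.sum_apply]
    exact Finset.sum_congr rfl fun i _ => hω i
  -- assemble condexp of H
  have hsplit : μ[fun ω => h1 ω - g2 ω + (h3 ω - g4 ω)|m]
      =ᵐ[μ] μ[fun ω => h1 ω - g2 ω|m] + μ[fun ω => h3 ω - g4 ω|m] :=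
    condExp_add (hh1int.sub hg2int) (hh3int.sub hg4int) m
  have hsub1 : μ[fun ω => h1 ω - g2 ω|m] =ᵐ[μ] μ[h1|m] - μ[g2|m] :=
    condExp_sub hh1int hg2int m
  have hsub2 : μ[fun ω => h3 ω - g4 ω|m] =ᵐ[μ] μ[h3|m] - μ[g4|m] :=
    condExp_sub hh3int hg4int m
  -- final assembly
  filter_upwards [hmono, hsplit, hsub1, hsub2, hh1cond, hh3cond] with ω hω1 hω2 hω3 hω4 hω5 hω6
  have key : (μ[fun ω => h1 ω - g2 ω + (h3 ω - g4 ω)|m]) ω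
      = V * (inner ℝ (f' (γ t ω)) γbar : ℝ) - g2 ω
        + ((∑ i, Q t ω i * (inner ℝ (a i) γbar : ℝ)) - g4 ω) := by
    rw [hω2, Pi.add_apply, hω3, hω4, Pi.sub_apply, Pi.sub_apply, hω5, hω6,
      hg2cond, hg4cond]
  have hsum_le : (∑ i, Q t ω i * (inner ℝ (a i) γbar : ℝ)) ≤ ∑ i, Q t ω i * b i :=
    Finset.sum_le_sum fun i _ =>
      mul_le_mul_of_nonneg_left (hγbarfeas i) (hQnonneg t ω i)
  have hrhs : V * (inner ℝ (f' (γ t ω)) (γbar - γ t ω) : ℝ)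
      = V * (inner ℝ (f' (γ t ω)) γbar : ℝ) - V * (inner ℝ (f' (γ t ω)) (γ t ω) : ℝ) := by
    rw [inner_sub_right, mul_sub]
  rw [hrhs]
  rw [key] at hω1
  simp only [hg2def, hg4def] at hω1
  linarith [hω1, hsum_le]
end

section
/- Define the coupled sequence γ̃_{−1} = 0 and γ̃_t = (1−η) γ̃_{t−1} + η x̃_t, where x̃_t = E[x_t | ℋ_t] is the conditional expectation of x_t given ℋ_t. Then for every t ≥ 0, E[ ‖γ_t − γ̃_t‖² ] ≤ η D². -/
open MeasureTheory ProbabilityTheory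
local notation "⟪" x ", " y "⟫ᵣ" => @inner ℝ _ _ x y

section Helpers

variable {Ω : Type*} {m m0 : MeasurableSpace Ω} {μ : Measure Ω}

lemma my_bdd_integrable [IsFiniteMeasure μ] {F : Type*} [NormedAddCommGroup F]
    {f : Ω → F} (hf : AEStronglyMeasurable f μ) {C : ℝ}
    (h : ∀ᵐ ω ∂μ, ‖f ω‖ ≤ C) : Integrable f μ :=
  Integrable.mono' (integrable_const C) hf h

lemma my_coord_le {d : ℕ} (v : EuclideanSpace ℝ (Fin d)) (i : Fin d) : |v i| ≤ ‖v‖ := by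
  rw [EuclideanSpace.norm_eq]
  calc |v i| = Real.sqrt (‖v i‖ ^ 2) := by
        rw [Real.sqrt_sq_eq_abs]; simp [Real.norm_eq_abs, abs_abs]
    _ ≤ Real.sqrt (∑ j, ‖v j‖ ^ 2) := by
        refine Real.sqrt_le_sqrt ?_
        exact Finset.single_le_sum (f := fun j => ‖v j‖ ^ 2) (fun j _ => sq_nonneg _)
          (Finset.mem_univ i)

lemma my_condexp_clm (hm : m ≤ m0) [IsFiniteMeasure μ]
    {E F : Type*} [NormedAddCommGroup E] [NormedSpace ℝ E] [CompleteSpace E]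
    [NormedAddCommGroup F] [NormedSpace ℝ F] [CompleteSpace F]
    (T : E →L[ℝ] F) {g : Ω → E} (hg : Integrable g μ) :
    (fun ω => T ((μ[g|m]) ω)) =ᵐ[μ] μ[fun ω => T (g ω)|m] := by
  refine ae_eq_condExp_of_forall_setIntegral_eq hm (T.integrable_comp hg)
    (fun s _ _ => (T.integrable_comp integrable_condExp).integrableOn)
    (fun s hs hμs => ?_)
    ((T.continuous.comp_stronglyMeasurable stronglyMeasurable_condExp).aestronglyMeasurable)
  rw [T.integral_comp_comm integrable_condExp.integrableOn,
    setIntegral_condExp hm hg hs, T.integral_comp_comm hg.integrableOn]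

variable {d : ℕ}

lemma my_condexp_coord_bdd (hm : m ≤ m0) [IsProbabilityMeasure μ]
    {g : Ω → EuclideanSpace ℝ (Fin d)} (hgm : AEStronglyMeasurable g μ)
    {Cg : ℝ} (hCg0 : 0 ≤ Cg) (hgb : ∀ᵐ ω ∂μ, ‖g ω‖ ≤ Cg) (i : Fin d) :
    ∀ᵐ ω ∂μ, |(μ[g|m]) ω i| ≤ Cg := by
  have hgint : Integrable g μ := my_bdd_integrable hgm hgb
  have h2 : (fun ω => (μ[g|m]) ω i) =ᵐ[μ] μ[fun ω => g ω i|m] :=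
    my_condexp_clm hm (EuclideanSpace.proj (𝕜 := ℝ) i) hgint
  have hb : ∀ᵐ ω ∂μ, |g ω i| ≤ (⟨Cg, hCg0⟩ : NNReal) := by
    filter_upwards [hgb] with ω hω
    exact le_trans (my_coord_le (g ω) i) hω
  have := ae_bdd_condExp_of_ae_bdd (m := m) hb
  filter_upwards [this, h2] with ω h1 h2'
  rw [h2']; exact h1

lemma my_condexp_norm_bdd (hm : m ≤ m0) [IsProbabilityMeasure μ]
    {g : Ω → EuclideanSpace ℝ (Fin d)} (hgm : AEStronglyMeasurable g μ)
    {Cg : ℝ} (hCg0 : 0 ≤ Cg) (hgb : ∀ᵐ ω ∂μ, ‖g ω‖ ≤ Cg) :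
    ∀ᵐ ω ∂μ, ‖(μ[g|m]) ω‖ ≤ Real.sqrt d * Cg := by
  have hall : ∀ᵐ ω ∂μ, ∀ i : Fin d, |(μ[g|m]) ω i| ≤ Cg :=
    (ae_all_iff).2 fun i => my_condexp_coord_bdd hm hgm hCg0 hgb i
  filter_upwards [hall] with ω hω
  have h1 : ‖(μ[g|m]) ω‖ ≤ Real.sqrt (∑ _i : Fin d, Cg ^ 2) := by
    rw [EuclideanSpace.norm_eq]
    refine Real.sqrt_le_sqrt (Finset.sum_le_sum fun i _ => ?_)
    have := hω i
    calc ‖(μ[g|m]) ω i‖ ^ 2 = |(μ[g|m]) ω i| ^ 2 := by rw [Real.norm_eq_abs]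
      _ ≤ Cg ^ 2 := by nlinarith [abs_nonneg ((μ[g|m]) ω i)]
  refine h1.trans (le_of_eq ?_)
  rw [Finset.sum_const, Finset.card_univ, Fintype.card_fin, nsmul_eq_mul,
    Real.sqrt_mul (Nat.cast_nonneg d), Real.sqrt_sq hCg0]

lemma my_integral_inner_condexp (hm : m ≤ m0) [IsProbabilityMeasure μ]
    {f g : Ω → EuclideanSpace ℝ (Fin d)}
    (hfm : StronglyMeasurable[m] f) {Cf Cg : ℝ} (hCf0 : 0 ≤ Cf) (hCg0 : 0 ≤ Cg)
    (hfb : ∀ᵐ ω ∂μ, ‖f ω‖ ≤ Cf)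
    (hgm : AEStronglyMeasurable g μ) (hgb : ∀ᵐ ω ∂μ, ‖g ω‖ ≤ Cg) :
    ∫ ω, ⟪f ω, g ω⟫ᵣ ∂μ = ∫ ω, ⟪f ω, (μ[g|m]) ω⟫ᵣ ∂μ := by
  have hgint : Integrable g μ := my_bdd_integrable hgm hgb
  have hfae : AEStronglyMeasurable f μ := (hfm.mono hm).aestronglyMeasurable
  have hcae : AEStronglyMeasurable (μ[g|m]) μ :=
    (stronglyMeasurable_condExp.mono hm).aestronglyMeasurable
  have hfi_ae : ∀ i : Fin d, AEStronglyMeasurable (fun ω => f ω i) μ := fun i =>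
    (EuclideanSpace.proj (𝕜 := ℝ) i).continuous.comp_aestronglyMeasurable hfae
  have hgi_ae : ∀ i : Fin d, AEStronglyMeasurable (fun ω => g ω i) μ := fun i =>
    (EuclideanSpace.proj (𝕜 := ℝ) i).continuous.comp_aestronglyMeasurable hgm
  have hci_ae : ∀ i : Fin d, AEStronglyMeasurable (fun ω => (μ[g|m]) ω i) μ := fun i =>
    (EuclideanSpace.proj (𝕜 := ℝ) i).continuous.comp_aestronglyMeasurable hcae
  have hfib : ∀ i : Fin d, ∀ᵐ ω ∂μ, |f ω i| ≤ Cf := fun i => by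
    filter_upwards [hfb] with ω hω; exact (my_coord_le (f ω) i).trans hω
  have hgib : ∀ i : Fin d, ∀ᵐ ω ∂μ, |g ω i| ≤ Cg := fun i => by
    filter_upwards [hgb] with ω hω; exact (my_coord_le (g ω) i).trans hω
  have hcib : ∀ i : Fin d, ∀ᵐ ω ∂μ, |(μ[g|m]) ω i| ≤ Cg := fun i =>
    my_condexp_coord_bdd hm hgm hCg0 hgb i
  have hint1 : ∀ i : Fin d, Integrable (fun ω => f ω i * g ω i) μ := fun i => by
    refine my_bdd_integrable ((hfi_ae i).mul (hgi_ae i)) (C := Cf * Cg) ?_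
    filter_upwards [hfib i, hgib i] with ω h1 h2
    rw [Real.norm_eq_abs, abs_mul]
    exact mul_le_mul h1 h2 (abs_nonneg _) hCf0
  have hint2 : ∀ i : Fin d, Integrable (fun ω => f ω i * (μ[g|m]) ω i) μ := fun i => by
    refine my_bdd_integrable ((hfi_ae i).mul (hci_ae i)) (C := Cf * Cg) ?_
    filter_upwards [hfib i, hcib i] with ω h1 h2
    rw [Real.norm_eq_abs, abs_mul]
    exact mul_le_mul h1 h2 (abs_nonneg _) hCf0
  have hcoord : ∀ i : Fin d,
      ∫ ω, f ω i * g ω i ∂μ = ∫ ω, f ω i * (μ[g|m]) ω i ∂μ := by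
    intro i
    have hfi : StronglyMeasurable[m] (fun ω => f ω i) :=
      (EuclideanSpace.proj (𝕜 := ℝ) i).continuous.comp_stronglyMeasurable hfm
    have hgi : Integrable (fun ω => g ω i) μ :=
      (EuclideanSpace.proj (𝕜 := ℝ) i).integrable_comp hgint
    have h1 : μ[(fun ω => f ω i) * (fun ω => g ω i)|m]
        =ᵐ[μ] (fun ω => f ω i) * μ[fun ω => g ω i|m] :=
      condExp_stronglyMeasurable_mul_of_bound hm hfi hgi Cf
        (by filter_upwards [hfib i] with ω h; rwa [Real.norm_eq_abs])
    have h2 : (fun ω => (μ[g|m]) ω i) =ᵐ[μ] μ[fun ω => g ω i|m] :=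
      my_condexp_clm hm (EuclideanSpace.proj (𝕜 := ℝ) i) hgint
    calc ∫ ω, f ω i * g ω i ∂μ
        = ∫ ω, ((fun ω => f ω i) * (fun ω => g ω i)) ω ∂μ := rfl
      _ = ∫ ω, (μ[(fun ω => f ω i) * (fun ω => g ω i)|m]) ω ∂μ := (integral_condExp hm).symm
      _ = ∫ ω, ((fun ω => f ω i) * μ[fun ω => g ω i|m]) ω ∂μ := integral_congr_ae h1
      _ = ∫ ω, f ω i * (μ[g|m]) ω i ∂μ := by
          refine integral_congr_ae ?_
          filter_upwards [h2] with ω hω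
          simp only [Pi.mul_apply, ← hω]
  calc ∫ ω, ⟪f ω, g ω⟫ᵣ ∂μ = ∫ ω, ∑ i, f ω i * g ω i ∂μ := by
        refine integral_congr_ae (Filter.Eventually.of_forall fun ω => ?_)
        simp [PiLp.inner_apply, RCLike.inner_apply, conj_trivial, mul_comm]
    _ = ∑ i, ∫ ω, f ω i * g ω i ∂μ := integral_finset_sum _ fun i _ => hint1 i
    _ = ∑ i, ∫ ω, f ω i * (μ[g|m]) ω i ∂μ := Finset.sum_congr rfl fun i _ => hcoord i
    _ = ∫ ω, ∑ i, f ω i * (μ[g|m]) ω i ∂μ := (integral_finset_sum _ fun i _ => hint2 i).symm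
    _ = ∫ ω, ⟪f ω, (μ[g|m]) ω⟫ᵣ ∂μ := by
        refine integral_congr_ae (Filter.Eventually.of_forall fun ω => ?_)
        simp [PiLp.inner_apply, RCLike.inner_apply, conj_trivial, mul_comm]

lemma my_cross_zero (hm : m ≤ m0) [IsProbabilityMeasure μ]
    {f g : Ω → EuclideanSpace ℝ (Fin d)}
    (hfm : StronglyMeasurable[m] f) {Cf Cg : ℝ} (hCf0 : 0 ≤ Cf) (hCg0 : 0 ≤ Cg)
    (hfb : ∀ᵐ ω ∂μ, ‖f ω‖ ≤ Cf)
    (hgm : AEStronglyMeasurable g μ) (hgb : ∀ᵐ ω ∂μ, ‖g ω‖ ≤ Cg) :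
    ∫ ω, ⟪f ω, g ω - (μ[g|m]) ω⟫ᵣ ∂μ = 0 := by
  have hfae : AEStronglyMeasurable f μ := (hfm.mono hm).aestronglyMeasurable
  have hcae : AEStronglyMeasurable (μ[g|m]) μ :=
    (stronglyMeasurable_condExp.mono hm).aestronglyMeasurable
  have hcb : ∀ᵐ ω ∂μ, ‖(μ[g|m]) ω‖ ≤ Real.sqrt d * Cg :=
    my_condexp_norm_bdd hm hgm hCg0 hgb
  have hint1 : Integrable (fun ω => ⟪f ω, g ω⟫ᵣ) μ := by
    refine my_bdd_integrable (hfae.inner hgm) (C := Cf * Cg) ?_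
    filter_upwards [hfb, hgb] with ω h1 h2
    exact (norm_inner_le_norm _ _).trans (mul_le_mul h1 h2 (norm_nonneg _) hCf0)
  have hint2 : Integrable (fun ω => ⟪f ω, (μ[g|m]) ω⟫ᵣ) μ := by
    refine my_bdd_integrable (hfae.inner hcae) (C := Cf * (Real.sqrt d * Cg)) ?_
    filter_upwards [hfb, hcb] with ω h1 h2
    exact (norm_inner_le_norm _ _).trans (mul_le_mul h1 h2 (norm_nonneg _) hCf0)
  have := my_integral_inner_condexp hm hfm hCf0 hCg0 hfb hgm hgb
  simp_rw [inner_sub_right]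
  rw [integral_sub hint1 hint2, this, sub_self]

lemma my_variance_bound (hm : m ≤ m0) [IsProbabilityMeasure μ]
    {g : Ω → EuclideanSpace ℝ (Fin d)}
    (hgm : AEStronglyMeasurable g μ) {Cg : ℝ} (hCg0 : 0 ≤ Cg)
    (hgb : ∀ᵐ ω ∂μ, ‖g ω‖ ≤ Cg) :
    ∫ ω, ‖g ω - (μ[g|m]) ω‖ ^ 2 ∂μ ≤ Cg ^ 2 := by
  set h := μ[g|m] with hh
  have hcae : AEStronglyMeasurable h μ :=
    (stronglyMeasurable_condExp.mono hm).aestronglyMeasurable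
  have hcb : ∀ᵐ ω ∂μ, ‖h ω‖ ≤ Real.sqrt d * Cg := my_condexp_norm_bdd hm hgm hCg0 hgb
  have hcross : ∫ ω, ⟪h ω, g ω - h ω⟫ᵣ ∂μ = 0 :=
    my_cross_zero hm stronglyMeasurable_condExp (mul_nonneg (Real.sqrt_nonneg _) hCg0)
      hCg0 hcb hgm hgb
  have hintg2 : Integrable (fun ω => ‖g ω‖ ^ 2) μ := by
    refine my_bdd_integrable (hgm.norm.pow 2) (C := Cg ^ 2) ?_
    filter_upwards [hgb] with ω h1
    rw [Real.norm_eq_abs, abs_of_nonneg (by positivity)]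
    exact pow_le_pow_left₀ (norm_nonneg _) h1 2
  have hinth2 : Integrable (fun ω => ‖h ω‖ ^ 2) μ := by
    refine my_bdd_integrable (hcae.norm.pow 2) (C := (Real.sqrt d * Cg) ^ 2) ?_
    filter_upwards [hcb] with ω h1
    rw [Real.norm_eq_abs, abs_of_nonneg (by positivity)]
    exact pow_le_pow_left₀ (norm_nonneg _) h1 2
  have hinthg : Integrable (fun ω => ⟪h ω, g ω⟫ᵣ) μ := by
    refine my_bdd_integrable (hcae.inner hgm) (C := Real.sqrt d * Cg * Cg) ?_
    filter_upwards [hcb, hgb] with ω h1 h2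
    exact (norm_inner_le_norm _ _).trans
      (mul_le_mul h1 h2 (norm_nonneg _) (by positivity))
  have hexp : ∀ ω, ‖g ω - h ω‖ ^ 2
      = ‖g ω‖ ^ 2 - 2 * ⟪h ω, g ω⟫ᵣ + ‖h ω‖ ^ 2 := fun ω => by
    rw [norm_sub_sq_real, real_inner_comm]
  have hsplit : ∫ ω, ⟪h ω, g ω - h ω⟫ᵣ ∂μ
      = ∫ ω, ⟪h ω, g ω⟫ᵣ ∂μ - ∫ ω, ‖h ω‖ ^ 2 ∂μ := by
    simp_rw [inner_sub_right]
    rw [integral_sub hinthg]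
    · congr 1
      exact integral_congr_ae (Filter.Eventually.of_forall fun ω => real_inner_self_eq_norm_sq _)
    · refine my_bdd_integrable (hcae.inner hcae) (C := (Real.sqrt d * Cg) * (Real.sqrt d * Cg)) ?_
      filter_upwards [hcb] with ω h1
      exact (norm_inner_le_norm _ _).trans
        (mul_le_mul h1 h1 (norm_nonneg _) (by positivity))
  have hhg : ∫ ω, ⟪h ω, g ω⟫ᵣ ∂μ = ∫ ω, ‖h ω‖ ^ 2 ∂μ := by
    have := hsplit.symm.trans hcross
    linarith
  have : ∫ ω, ‖g ω - h ω‖ ^ 2 ∂μ = ∫ ω, ‖g ω‖ ^ 2 ∂μ - ∫ ω, ‖h ω‖ ^ 2 ∂μ := by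
    have hintA : Integrable (fun ω => ‖g ω‖ ^ 2 - 2 * ⟪h ω, g ω⟫ᵣ) μ :=
      hintg2.sub (hinthg.const_mul 2)
    rw [integral_congr_ae (Filter.Eventually.of_forall hexp), integral_add hintA hinth2,
      integral_sub hintg2 (hinthg.const_mul 2), integral_const_mul, hhg]
    ring
  rw [this]
  have h1 : ∫ ω, ‖g ω‖ ^ 2 ∂μ ≤ Cg ^ 2 := by
    calc ∫ ω, ‖g ω‖ ^ 2 ∂μ ≤ ∫ _ω, Cg ^ 2 ∂μ := by
          refine integral_mono_ae hintg2 (integrable_const _) ?_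
          filter_upwards [hgb] with ω h
          exact pow_le_pow_left₀ (norm_nonneg _) h 2
      _ = Cg ^ 2 := by simp
  have h2 : 0 ≤ ∫ ω, ‖h ω‖ ^ 2 ∂μ :=
    integral_nonneg fun ω => sq_nonneg _
  linarith

end Helpers

theorem stmt9
    {d : ℕ}
    {Ω : Type*} {m0 : MeasurableSpace Ω} (μ : Measure Ω) [IsProbabilityMeasure μ]
    (ℋ : Filtration ℕ m0)
    (Bset : Set (EuclideanSpace ℝ (Fin d))) (D : ℝ)
    (hBconv : Convex ℝ Bset) (hBcpt : IsCompact Bset)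
    (hB0 : (0 : EuclideanSpace ℝ (Fin d)) ∈ Bset)
    (hBD : ∀ z ∈ Bset, ∀ w ∈ Bset, ‖z - w‖ ≤ D)
    (x : ℕ → Ω → EuclideanSpace ℝ (Fin d))
    (hxB : ∀ t ω, x t ω ∈ Bset)
    (hxmeas : ∀ t, Measurable[ℋ (t + 1)] (x t))
    (η : ℝ) (hη0 : 0 < η) (hη1 : η < 1)
    (γ : ℕ → Ω → EuclideanSpace ℝ (Fin d))
    (hγ0 : ∀ ω, γ 0 ω = 0)
    (hγrec : ∀ t ω, γ (t + 1) ω = (1 - η) • γ t ω + η • x t ω)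
    (γt : ℕ → Ω → EuclideanSpace ℝ (Fin d))
    (hγt0 : ∀ ω, γt 0 ω = 0)
    (hγtrec : ∀ t ω, γt (t + 1) ω = (1 - η) • γt t ω + η • (μ[x t | ℋ t]) ω) :
    ∀ t : ℕ, (∫ ω, ‖γ (t + 1) ω - γt (t + 1) ω‖ ^ 2 ∂μ) ≤ η * D ^ 2 := by
  have hle : ∀ t, ℋ t ≤ m0 := fun t => ℋ.le t
  have hD0 : 0 ≤ D := by simpa using hBD 0 hB0 0 hB0
  have hxD : ∀ t ω, ‖x t ω‖ ≤ D := fun t ω => by simpa using hBD (x t ω) (hxB t ω) 0 hB0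
  set C : ℝ := Real.sqrt d * D with hCdef
  have hC0 : 0 ≤ C := mul_nonneg (Real.sqrt_nonneg _) hD0
  have hxsm : ∀ t, StronglyMeasurable[ℋ (t + 1)] (x t) := fun t => (hxmeas t).stronglyMeasurable
  have hxae : ∀ t, AEStronglyMeasurable (x t) μ := fun t =>
    ((hxsm t).mono (hle (t + 1))).aestronglyMeasurable
  have hcondae : ∀ t, AEStronglyMeasurable (μ[x t|ℋ t]) μ := fun t =>
    (stronglyMeasurable_condExp.mono (hle t)).aestronglyMeasurable
  have hcb : ∀ t, ∀ᵐ ω ∂μ, ‖(μ[x t|ℋ t]) ω‖ ≤ C := fun t =>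
    my_condexp_norm_bdd (hle t) (hxae t) hD0 (Filter.Eventually.of_forall (hxD t))
  have hγm : ∀ t, StronglyMeasurable[ℋ t] (γ t) := by
    intro t; induction t with
    | zero =>
      have h0 : γ 0 = fun _ => 0 := funext hγ0
      rw [h0]; exact stronglyMeasurable_const
    | succ t ih =>
      have h1 : γ (t + 1) = fun ω => (1 - η) • γ t ω + η • x t ω := funext (hγrec t)
      rw [h1]
      exact ((ih.mono (ℋ.mono (Nat.le_succ t))).const_smul (1 - η)).add ((hxsm t).const_smul η)
  have hγtm : ∀ t, StronglyMeasurable[ℋ t] (γt t) := by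
    intro t; induction t with
    | zero =>
      have h0 : γt 0 = fun _ => 0 := funext hγt0
      rw [h0]; exact stronglyMeasurable_const
    | succ t ih =>
      have h1 : γt (t + 1) = fun ω => (1 - η) • γt t ω + η • (μ[x t|ℋ t]) ω :=
        funext (hγtrec t)
      rw [h1]
      exact ((ih.mono (ℋ.mono (Nat.le_succ t))).const_smul (1 - η)).add
        ((stronglyMeasurable_condExp.mono (ℋ.mono (Nat.le_succ t))).const_smul η)
  have hγb : ∀ t ω, ‖γ t ω‖ ≤ D := by
    intro t; induction t with
    | zero => intro ω; rw [hγ0]; simpa using hD0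
    | succ t ih =>
      intro ω
      rw [hγrec]
      calc ‖(1 - η) • γ t ω + η • x t ω‖ ≤ ‖(1 - η) • γ t ω‖ + ‖η • x t ω‖ := norm_add_le _ _
        _ = (1 - η) * ‖γ t ω‖ + η * ‖x t ω‖ := by
            rw [norm_smul, norm_smul, Real.norm_eq_abs, Real.norm_eq_abs,
              abs_of_nonneg (by linarith), abs_of_nonneg hη0.le]
        _ ≤ D := by nlinarith [ih ω, hxD t ω, norm_nonneg (γ t ω), norm_nonneg (x t ω)]
  have hγtb : ∀ t, ∀ᵐ ω ∂μ, ‖γt t ω‖ ≤ C := by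
    intro t; induction t with
    | zero =>
      refine Filter.Eventually.of_forall fun ω => ?_
      rw [hγt0]; simpa using hC0
    | succ t ih =>
      filter_upwards [ih, hcb t] with ω h1 h2
      rw [hγtrec]
      calc ‖(1 - η) • γt t ω + η • (μ[x t|ℋ t]) ω‖
          ≤ ‖(1 - η) • γt t ω‖ + ‖η • (μ[x t|ℋ t]) ω‖ := norm_add_le _ _
        _ = (1 - η) * ‖γt t ω‖ + η * ‖(μ[x t|ℋ t]) ω‖ := by
            rw [norm_smul, norm_smul, Real.norm_eq_abs, Real.norm_eq_abs,
              abs_of_nonneg (by linarith), abs_of_nonneg hη0.le]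
        _ ≤ C := by nlinarith [norm_nonneg (γt t ω), norm_nonneg ((μ[x t|ℋ t]) ω)]
  have key : ∀ t, (∫ ω, ‖γ t ω - γt t ω‖ ^ 2 ∂μ) ≤ η * D ^ 2 := by
    intro t; induction t with
    | zero =>
      have h0 : (∫ ω, ‖γ 0 ω - γt 0 ω‖ ^ 2 ∂μ) = 0 := by
        simp [hγ0, hγt0]
      rw [h0]; positivity
    | succ t ih =>
      have hδm : StronglyMeasurable[ℋ t] (fun ω => γ t ω - γt t ω) := (hγm t).sub (hγtm t)
      have hδae : AEStronglyMeasurable (fun ω => γ t ω - γt t ω) μ :=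
        (hδm.mono (hle t)).aestronglyMeasurable
      have hδb : ∀ᵐ ω ∂μ, ‖γ t ω - γt t ω‖ ≤ D + C := by
        filter_upwards [hγtb t] with ω h1
        exact (norm_sub_le _ _).trans (add_le_add (hγb t ω) h1)
      have huae : AEStronglyMeasurable (fun ω => x t ω - (μ[x t|ℋ t]) ω) μ :=
        (hxae t).sub (hcondae t)
      have hub : ∀ᵐ ω ∂μ, ‖x t ω - (μ[x t|ℋ t]) ω‖ ≤ D + C := by
        filter_upwards [hcb t] with ω h1
        exact (norm_sub_le _ _).trans (add_le_add (hxD t ω) h1)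
      have hcross : ∫ ω, ⟪γ t ω - γt t ω, x t ω - (μ[x t|ℋ t]) ω⟫ᵣ ∂μ = 0 :=
        my_cross_zero (hle t) hδm (by linarith) hD0 hδb (hxae t)
          (Filter.Eventually.of_forall (hxD t))
      have hvar : ∫ ω, ‖x t ω - (μ[x t|ℋ t]) ω‖ ^ 2 ∂μ ≤ D ^ 2 :=
        my_variance_bound (hle t) (hxae t) hD0 (Filter.Eventually.of_forall (hxD t))
      have hpt : ∀ ω, ‖γ (t + 1) ω - γt (t + 1) ω‖ ^ 2
          = (1 - η) ^ 2 * ‖γ t ω - γt t ω‖ ^ 2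
            + (2 * ((1 - η) * η)) * ⟪γ t ω - γt t ω, x t ω - (μ[x t|ℋ t]) ω⟫ᵣ
            + η ^ 2 * ‖x t ω - (μ[x t|ℋ t]) ω‖ ^ 2 := by
        intro ω
        rw [hγrec, hγtrec]
        have e : (1 - η) • γ t ω + η • x t ω - ((1 - η) • γt t ω + η • (μ[x t|ℋ t]) ω)
            = (1 - η) • (γ t ω - γt t ω) + η • (x t ω - (μ[x t|ℋ t]) ω) := by module
        rw [e, norm_add_sq_real, norm_smul, norm_smul, real_inner_smul_left,
          real_inner_smul_right, Real.norm_eq_abs, Real.norm_eq_abs,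
          abs_of_nonneg (by linarith : (0:ℝ) ≤ 1 - η), abs_of_nonneg hη0.le]
        ring
      have hA : Integrable (fun ω => ‖γ t ω - γt t ω‖ ^ 2) μ := by
        refine my_bdd_integrable (hδae.norm.pow 2) (C := (D + C) ^ 2) ?_
        filter_upwards [hδb] with ω h1
        rw [Real.norm_eq_abs, abs_of_nonneg (by positivity)]
        exact pow_le_pow_left₀ (norm_nonneg _) h1 2
      have hB : Integrable (fun ω => ⟪γ t ω - γt t ω, x t ω - (μ[x t|ℋ t]) ω⟫ᵣ) μ := by
        refine my_bdd_integrable (hδae.inner huae) (C := (D + C) * (D + C)) ?_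
        filter_upwards [hδb, hub] with ω h1 h2
        exact (norm_inner_le_norm _ _).trans
          (mul_le_mul h1 h2 (norm_nonneg _) (by linarith))
      have hCc : Integrable (fun ω => ‖x t ω - (μ[x t|ℋ t]) ω‖ ^ 2) μ := by
        refine my_bdd_integrable (huae.norm.pow 2) (C := (D + C) ^ 2) ?_
        filter_upwards [hub] with ω h1
        rw [Real.norm_eq_abs, abs_of_nonneg (by positivity)]
        exact pow_le_pow_left₀ (norm_nonneg _) h1 2
      have hsplit : (∫ ω, ‖γ (t + 1) ω - γt (t + 1) ω‖ ^ 2 ∂μ)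
          = (1 - η) ^ 2 * (∫ ω, ‖γ t ω - γt t ω‖ ^ 2 ∂μ)
            + (2 * ((1 - η) * η)) * (∫ ω, ⟪γ t ω - γt t ω, x t ω - (μ[x t|ℋ t]) ω⟫ᵣ ∂μ)
            + η ^ 2 * (∫ ω, ‖x t ω - (μ[x t|ℋ t]) ω‖ ^ 2 ∂μ) := by
        have hI1 : Integrable (fun ω => (1 - η) ^ 2 * ‖γ t ω - γt t ω‖ ^ 2
            + (2 * ((1 - η) * η)) * ⟪γ t ω - γt t ω, x t ω - (μ[x t|ℋ t]) ω⟫ᵣ) μ :=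
          (hA.const_mul _).add (hB.const_mul _)
        rw [integral_congr_ae (Filter.Eventually.of_forall hpt),
          integral_add hI1 (hCc.const_mul _),
          integral_add (hA.const_mul _) (hB.const_mul _),
          integral_const_mul, integral_const_mul, integral_const_mul]
      rw [hsplit, hcross]
      have hIA : 0 ≤ ∫ ω, ‖γ t ω - γt t ω‖ ^ 2 ∂μ := integral_nonneg fun ω => sq_nonneg _
      have hIC : 0 ≤ ∫ ω, ‖x t ω - (μ[x t|ℋ t]) ω‖ ^ 2 ∂μ :=
        integral_nonneg fun ω => sq_nonneg _
      have k1 : (1 - η) ^ 2 * (∫ ω, ‖γ t ω - γt t ω‖ ^ 2 ∂μ) ≤ (1 - η) ^ 2 * (η * D ^ 2) :=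
        mul_le_mul_of_nonneg_left ih (sq_nonneg _)
      have k2 : η ^ 2 * (∫ ω, ‖x t ω - (μ[x t|ℋ t]) ω‖ ^ 2 ∂μ) ≤ η ^ 2 * D ^ 2 :=
        mul_le_mul_of_nonneg_left hvar (sq_nonneg _)
      nlinarith [k1, k2, mul_nonneg (mul_nonneg (sq_nonneg D) (sq_nonneg η))
        (by linarith : (0:ℝ) ≤ 1 - η)]
  intro t
  exact key (t + 1)
end

section
/- (Lipschitz continuity of the Frank–Wolfe gap.) For all γ, γ̃ ∈ 𝓑, | 𝒢(γ) − 𝒢(γ̃) | ≤ (2DL + M) ‖γ − γ̃‖. -/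
open MeasureTheory ProbabilityTheory

theorem stmt17
    {d N : ℕ}
    (Bset : Set (EuclideanSpace ℝ (Fin d))) (D : ℝ)
    (hBconv : Convex ℝ Bset) (hBcpt : IsCompact Bset)
    (hB0 : (0 : EuclideanSpace ℝ (Fin d)) ∈ Bset)
    (hBD : ∀ z ∈ Bset, ∀ w ∈ Bset, ‖z - w‖ ≤ D)
    (f : EuclideanSpace ℝ (Fin d) → ℝ) (f' : EuclideanSpace ℝ (Fin d) → EuclideanSpace ℝ (Fin d)) (L M : ℝ)
    (hgrad : ∀ z, HasGradientAt f (f' z) z)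
    (hLip : ∀ z ∈ Bset, ∀ w ∈ Bset, ‖f' z - f' w‖ ≤ L * ‖z - w‖)
    (hM : ∀ z ∈ Bset, ‖f' z‖ ≤ M)
    (a : Fin N → EuclideanSpace ℝ (Fin d)) (b : Fin N → ℝ)
    (G : Set (EuclideanSpace ℝ (Fin d))) (hGsub : G ⊆ Bset) (hGclosed : IsClosed G)
    (hGconv : Convex ℝ G) (hG0 : (0 : EuclideanSpace ℝ (Fin d)) ∈ G)
    (C : Set (EuclideanSpace ℝ (Fin d))) (hC : C = {v | v ∈ G ∧ ∀ i, (inner ℝ (a i) v : ℝ) ≤ b i})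
    (hCne : C.Nonempty) :
    ∀ z ∈ Bset, ∀ w ∈ Bset,
      |sSup ((fun v => (inner ℝ (f' (z)) ((z) - v) : ℝ)) '' C) - sSup ((fun v => (inner ℝ (f' (w)) ((w) - v) : ℝ)) '' C)|
        ≤ (2 * D * L + M) * ‖z - w‖ := by

  obtain ⟨v0, hv0⟩ := hCne
  have hCB : C ⊆ Bset := by
    rw [hC]; intro v hv; exact hGsub hv.1
  have hD0 : 0 ≤ D := by
    have := hBD 0 hB0 0 hB0; simpa using this
  have key : ∀ p ∈ Bset, ∀ q ∈ Bset,
      sSup ((fun v => (inner ℝ (f' p) (p - v) : ℝ)) '' C) -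
        sSup ((fun v => (inner ℝ (f' q) (q - v) : ℝ)) '' C) ≤ (2 * D * L + M) * ‖p - q‖ := by
    intro p hp q hq
    have hM0 : 0 ≤ M := (norm_nonneg _).trans (hM q hq)
    have hbdd : BddAbove ((fun v => (inner ℝ (f' q) (q - v) : ℝ)) '' C) := by
      refine ⟨M * D, ?_⟩
      rintro _ ⟨v, hv, rfl⟩
      calc (inner ℝ (f' q) (q - v) : ℝ) ≤ ‖f' q‖ * ‖q - v‖ := real_inner_le_norm _ _
        _ ≤ M * D := mul_le_mul (hM q hq) (hBD q hq v (hCB hv)) (norm_nonneg _) hM0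
    rw [sub_le_iff_le_add]
    refine csSup_le ⟨_, ⟨v0, hv0, rfl⟩⟩ ?_
    rintro _ ⟨v, hv, rfl⟩
    have hle : (inner ℝ (f' q) (q - v) : ℝ) ≤ sSup ((fun v => (inner ℝ (f' q) (q - v) : ℝ)) '' C) :=
      le_csSup hbdd ⟨v, hv, rfl⟩
    have hdec : (inner ℝ (f' p) (p - v) : ℝ) =
        inner ℝ (f' q) (q - v) + inner ℝ (f' p - f' q) (p - v) + inner ℝ (f' q) (p - q) := by
      simp [inner_sub_left, inner_sub_right]; ring
    have hLn : 0 ≤ L * ‖p - q‖ := (norm_nonneg _).trans (hLip p hp q hq)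
    have h1 : (inner ℝ (f' p - f' q) (p - v) : ℝ) ≤ (L * ‖p - q‖) * D :=
      (real_inner_le_norm _ _).trans
        (mul_le_mul (hLip p hp q hq) (hBD p hp v (hCB hv)) (norm_nonneg _) hLn)
    have h2 : (inner ℝ (f' q) (p - q) : ℝ) ≤ M * ‖p - q‖ :=
      (real_inner_le_norm _ _).trans (mul_le_mul_of_nonneg_right (hM q hq) (norm_nonneg _))
    have hDLn : 0 ≤ D * (L * ‖p - q‖) := mul_nonneg hD0 hLn
    nlinarith [hle, hdec, h1, h2, hDLn]
  intro z hz w hw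
  rw [abs_sub_le_iff]
  refine ⟨key z hz w hw, ?_⟩
  have := key w hw z hz
  rwa [norm_sub_rev] at this
end
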